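/- Let n ≥ 2. In the rational function field ℚ(P,T) define Z◁_n(P,T) := (∏_{i=0}^{n−1}(1−P^i T)^{−1})·(1−P^{n(n−1)} T^{2n−1})^{−1}·Σ_{w∈S_{n−1}} P^{−l(w)} Σ_{I⊆{1,…,n−2}, I⊇ν(w)} ∏_{i∈I} X_i/(1−X_i), where X_i := P^{(n+i)(n−i−1)} T^{2(n−i)−1}. Then Z◁_n(P^{−1},T^{−1}) = −P^{(2n−1)(2n−2)/2}·T^{3n−1}·Z◁_n(P,T). -/

import Mathlib

/-- The descent set ν(w) ⊆ {1,…,n−1} of a permutation w of {1,…,n}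
(realized as `Equiv.Perm (Fin n)` via 0-indexing: position i corresponds to `⟨i-1,_⟩`). -/
def descents {n : ℕ} (w : Equiv.Perm (Fin n)) : Finset ℕ :=
  (Finset.Icc 1 (n - 1)).filter fun i =>
    ∃ hi : i < n, w ⟨i, hi⟩ < w ⟨i - 1, Nat.lt_of_le_of_lt (Nat.sub_le i 1) hi⟩

/-- The number of inversions l(w) of a permutation. -/
def invCount {n : ℕ} (w : Equiv.Perm (Fin n)) : ℕ :=
  (Finset.univ.filter fun q : Fin n × Fin n => q.1 < q.2 ∧ w q.2 < w q.1).card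

/-- The rational expression `W_{n,I}(X,Y)` over a field, with `Z̲ := Z/(1-Z)`. -/
noncomputable def Wrat {K : Type*} [Field K] (n : ℕ) (I : Finset ℕ) (X Y : ℕ → K) : K :=
  (X 0 / (1 - X 0)) * ∏ i ∈ I, X i / (1 - X i)
  + (Y n / (1 - Y n)) * ∏ i ∈ I, Y i / (1 - Y i)
  + ∑ j ∈ I, (∏ i ∈ I.filter (· ≤ j), Y i / (1 - Y i)) *
      ∏ i ∈ I.filter (fun i => j ≤ i), X i / (1 - X i)
  + ∑ j ∈ insert n I, (∏ i ∈ I.filter (· < j), Y i / (1 - Y i)) *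
      ∏ i ∈ I.filter (fun i => j ≤ i), X i / (1 - X i)

/-- The rational function field ℚ(P,T). -/
abbrev QPT := FractionRing (MvPolynomial (Fin 2) ℚ)

/-- The variable P of ℚ(P,T). -/
noncomputable def Pv : QPT := algebraMap (MvPolynomial (Fin 2) ℚ) QPT (MvPolynomial.X 0)

/-- The variable T of ℚ(P,T). -/
noncomputable def Tv : QPT := algebraMap (MvPolynomial (Fin 2) ℚ) QPT (MvPolynomial.X 1)


/-- The local normal zeta function `Z◁_n(P,T)` of G_n as a two-variable rational function,
evaluated at a pair of elements of ℚ(P,T). -/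
noncomputable def Znormal (n : ℕ) (P T : QPT) : QPT :=
  (∏ i ∈ Finset.range n, (1 - P ^ i * T)⁻¹) *
    (1 - P ^ (n * (n - 1)) * T ^ (2 * n - 1))⁻¹ *
    ∑ w : Equiv.Perm (Fin (n - 1)),
      P ^ (-(invCount w : ℤ)) *
        ∑ I ∈ (Finset.Icc 1 (n - 2)).powerset.filter (fun I => descents w ⊆ I),
          ∏ i ∈ I,
            (P ^ ((n + i) * (n - i - 1)) * T ^ (2 * (n - i) - 1)) /
              (1 - P ^ ((n + i) * (n - i - 1)) * T ^ (2 * (n - i) - 1))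

/-! ### Auxiliary lemmas -/

section FieldAux
variable {K : Type*} [Field K]

lemma aux_one_add_div {x : K} (hx : 1 - x ≠ 0) : 1 + x / (1 - x) = (1 - x)⁻¹ := by
  field_simp
  ring

lemma aux_one_sub_inv_eq {x : K} (hx0 : x ≠ 0) : 1 - x⁻¹ = -(1 - x) * x⁻¹ := by
  field_simp
  ring

lemma aux_inv_one_sub_inv {x : K} (hx0 : x ≠ 0) (hx : 1 - x ≠ 0) :
    (1 - x⁻¹)⁻¹ = -(x * (1 - x)⁻¹) := by
  rw [aux_one_sub_inv_eq hx0, mul_inv, inv_neg, inv_inv, neg_mul, mul_comm]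

lemma aux_inv_div {x : K} (hx0 : x ≠ 0) (hx : 1 - x ≠ 0) :
    x⁻¹ / (1 - x⁻¹) = -(1 - x)⁻¹ := by
  rw [div_eq_mul_inv, aux_inv_one_sub_inv hx0 hx]
  rw [mul_neg, ← mul_assoc, inv_mul_cancel₀ hx0, one_mul]

lemma aux_one_add_inv_div {x : K} (hx0 : x ≠ 0) (hx : 1 - x ≠ 0) :
    1 + x⁻¹ / (1 - x⁻¹) = -(x * (1 - x)⁻¹) := by
  rw [aux_inv_div hx0 hx, ← sub_eq_add_neg]
  have h := mul_inv_cancel₀ hx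
  nth_rewrite 1 [← h]
  ring

lemma prod_neg' {K : Type*} [CommRing K] (s : Finset ℕ) (f : ℕ → K) :
    ∏ i ∈ s, (-(f i)) = (-1) ^ s.card * ∏ i ∈ s, f i := by
  rw [← Finset.prod_const, ← Finset.prod_mul_distrib]
  simp

end FieldAux

lemma injQ : Function.Injective (algebraMap (MvPolynomial (Fin 2) ℚ) QPT) :=
  IsFractionRing.injective _ _

lemma Pv_ne : Pv ≠ 0 := by
  simp only [Pv, ne_eq, ← (algebraMap (MvPolynomial (Fin 2) ℚ) QPT).map_zero]
  intro h
  exact MvPolynomial.X_ne_zero 0 (injQ h)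

lemma Tv_ne : Tv ≠ 0 := by
  simp only [Tv, ne_eq, ← (algebraMap (MvPolynomial (Fin 2) ℚ) QPT).map_zero]
  intro h
  exact MvPolynomial.X_ne_zero 1 (injQ h)

lemma one_sub_ne (a b : ℕ) (hb : 1 ≤ b) : (1 : QPT) - Pv ^ a * Tv ^ b ≠ 0 := by
  intro h
  have h2 : algebraMap (MvPolynomial (Fin 2) ℚ) QPT
      (1 - MvPolynomial.X 0 ^ a * MvPolynomial.X 1 ^ b) =
      algebraMap (MvPolynomial (Fin 2) ℚ) QPT 0 := by
    rw [map_sub, map_mul, map_pow, map_pow, map_one, map_zero, ← Pv, ← Tv, h]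
  have h3 := injQ h2
  have h4 := congrArg (MvPolynomial.eval (fun _ => (0:ℚ))) h3
  simp [zero_pow (by omega : b ≠ 0)] at h4

/-! ### Combinatorial lemmas -/

lemma sum_powerset_filter {K : Type*} [CommRing K] (D ν : Finset ℕ) (hν : ν ⊆ D) (f : ℕ → K) :
    ∑ I ∈ D.powerset.filter (fun I => ν ⊆ I), ∏ i ∈ I, f i
      = (∏ i ∈ ν, f i) * ∏ i ∈ D \ ν, (1 + f i) := by
  have h1 : ∏ i ∈ D \ ν, (1 + f i) = ∑ t ∈ (D \ ν).powerset, ∏ i ∈ t, f i := by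
    calc ∏ i ∈ D \ ν, (1 + f i) = ∏ i ∈ D \ ν, (f i + 1) := by simp [add_comm]
    _ = ∑ t ∈ (D \ ν).powerset, (∏ i ∈ t, f i) * ∏ i ∈ (D \ ν) \ t, 1 :=
        Finset.prod_add _ _ _
    _ = _ := by simp
  rw [h1, Finset.mul_sum]
  refine Finset.sum_nbij' (i := fun I => I \ ν) (j := fun J => ν ∪ J) ?_ ?_ ?_ ?_ ?_
  · intro I hI
    simp only [Finset.mem_filter, Finset.mem_powerset] at hI ⊢
    exact Finset.sdiff_subset_sdiff hI.1 le_rfl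
  · intro J hJ
    simp only [Finset.mem_filter, Finset.mem_powerset] at hJ ⊢
    exact ⟨Finset.union_subset hν (hJ.trans (Finset.sdiff_subset)), Finset.subset_union_left⟩
  · intro I hI
    simp only [Finset.mem_filter, Finset.mem_powerset] at hI
    exact Finset.union_sdiff_of_subset hI.2
  · intro J hJ
    simp only [Finset.mem_powerset] at hJ
    have hd : Disjoint ν J := Finset.disjoint_left.mpr fun a ha hb =>
      (Finset.mem_sdiff.mp (hJ hb)).2 ha
    exact Finset.union_sdiff_cancel_left hd
  · intro I hI
    simp only [Finset.mem_filter, Finset.mem_powerset] at hI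
    rw [← Finset.prod_sdiff hI.2, mul_comm]

lemma descents_rev {m : ℕ} (w : Equiv.Perm (Fin m)) :
    descents (Fin.revPerm * w) = (Finset.Icc 1 (m - 1)) \ descents w := by
  ext i
  simp only [descents, Finset.mem_filter, Finset.mem_sdiff, Finset.mem_Icc,
    Equiv.Perm.mul_apply, Fin.revPerm_apply]
  constructor
  · rintro ⟨⟨h1, h2⟩, hi, hlt⟩
    refine ⟨⟨h1, h2⟩, ?_⟩
    rintro ⟨-, hi', hlt'⟩
    have := Fin.rev_lt_rev.mp hlt
    exact absurd hlt' (not_lt.mpr this.le)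
  · rintro ⟨⟨h1, h2⟩, hnot⟩
    have hi : i < m := by omega
    refine ⟨⟨h1, h2⟩, hi, ?_⟩
    rw [Fin.rev_lt_rev]
    have hne : w ⟨i, hi⟩ ≠ w ⟨i - 1, Nat.lt_of_le_of_lt (Nat.sub_le i 1) hi⟩ := by
      intro h
      have := w.injective h
      have : i = i - 1 := congrArg Fin.val this
      omega
    have hnot' : ¬ (w ⟨i, hi⟩ < w ⟨i - 1, Nat.lt_of_le_of_lt (Nat.sub_le i 1) hi⟩) :=
      fun h => hnot ⟨⟨h1, h2⟩, hi, h⟩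
    rcases lt_or_gt_of_ne hne with h | h
    · exact absurd h hnot'
    · exact h

lemma card_lt_pairs (m : ℕ) :
    (Finset.univ.filter fun q : Fin m × Fin m => q.1 < q.2).card = m * (m - 1) / 2 := by
  rw [Finset.card_filter, Fintype.sum_prod_type, Finset.sum_comm]
  have h : ∀ j : Fin m, (∑ i : Fin m, if (i < j) then (1:ℕ) else 0) = (j : ℕ) := by
    intro j
    rw [← Finset.card_filter]
    have : (Finset.univ.filter fun i : Fin m => i < j) = Finset.Iio j := by
      ext x; simp
    rw [this, Fin.card_Iio]
  simp_rw [h]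
  rw [Fin.sum_univ_eq_sum_range (fun i => i) m, Finset.sum_range_id]

lemma invCount_rev_add {m : ℕ} (w : Equiv.Perm (Fin m)) :
    invCount (Fin.revPerm * w) + invCount w = m * (m - 1) / 2 := by
  classical
  have key : (Finset.univ.filter fun q : Fin m × Fin m =>
      q.1 < q.2 ∧ ((Fin.revPerm (n := m) * w) q.2 : Fin m) < (Fin.revPerm (n := m) * w) q.1)
      = Finset.univ.filter fun q : Fin m × Fin m => q.1 < q.2 ∧ ¬ (w q.2 < w q.1) := by
    apply Finset.filter_congr
    intro q _
    simp only [Equiv.Perm.mul_apply, Fin.revPerm_apply, Fin.rev_lt_rev]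
    constructor
    · rintro ⟨h1, h2⟩; exact ⟨h1, not_lt.mpr h2.le⟩
    · rintro ⟨h1, h2⟩
      refine ⟨h1, lt_of_le_of_ne (not_lt.mp h2) ?_⟩
      intro heq
      exact absurd (w.injective heq) (ne_of_gt h1).symm
  have h1 : invCount w =
      ((Finset.univ.filter fun q : Fin m × Fin m => q.1 < q.2).filter
        fun q => w q.2 < w q.1).card := by
    rw [Finset.filter_filter]; rfl
  have h2 : invCount (Fin.revPerm * w) =
      ((Finset.univ.filter fun q : Fin m × Fin m => q.1 < q.2).filter
        fun q => ¬ (w q.2 < w q.1)).card := by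
    rw [Finset.filter_filter]
    unfold invCount
    rw [key]
  rw [h1, h2, add_comm, Finset.card_filter_add_card_filter_not, card_lt_pairs]

/-! ### The building blocks of `Znormal` -/

noncomputable def Xv (n i : ℕ) : QPT :=
  Pv ^ ((n + i) * (n - i - 1)) * Tv ^ (2 * (n - i) - 1)

lemma Xv_def (n i : ℕ) :
    Xv n i = Pv ^ ((n + i) * (n - i - 1)) * Tv ^ (2 * (n - i) - 1) := rfl

lemma Xv_ne (n i : ℕ) : Xv n i ≠ 0 :=
  mul_ne_zero (pow_ne_zero _ Pv_ne) (pow_ne_zero _ Tv_ne)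

lemma one_sub_Xv_ne {n : ℕ} (hn : 2 ≤ n) {i : ℕ} (hi : i ≤ n - 2) :
    (1:QPT) - Xv n i ≠ 0 :=
  one_sub_ne _ _ (by omega)

lemma descents_subset {n : ℕ} (hn : 2 ≤ n) (w : Equiv.Perm (Fin (n - 1))) :
    descents w ⊆ Finset.Icc 1 (n - 2) := by
  have h : n - 1 - 1 = n - 2 := by omega
  intro i hi
  have := (Finset.mem_filter.mp hi).1
  rwa [h] at this

lemma inner_eq {n : ℕ} (hn : 2 ≤ n) (w : Equiv.Perm (Fin (n - 1))) :
    ∑ I ∈ (Finset.Icc 1 (n - 2)).powerset.filter (fun I => descents w ⊆ I),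
      ∏ i ∈ I, Xv n i / (1 - Xv n i)
    = (∏ i ∈ descents w, Xv n i) * ∏ i ∈ Finset.Icc 1 (n - 2), (1 - Xv n i)⁻¹ := by
  rw [sum_powerset_filter _ _ (descents_subset hn w)]
  have h2 : ∀ i ∈ Finset.Icc 1 (n - 2) \ descents w,
      1 + Xv n i / (1 - Xv n i) = (1 - Xv n i)⁻¹ := fun i hi =>
    aux_one_add_div (one_sub_Xv_ne hn
      (Finset.mem_Icc.mp ((Finset.mem_sdiff.mp hi).1)).2)
  rw [Finset.prod_congr rfl h2]
  have h3 : ∏ i ∈ descents w, Xv n i / (1 - Xv n i)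
      = (∏ i ∈ descents w, Xv n i) * ∏ i ∈ descents w, (1 - Xv n i)⁻¹ := by
    rw [← Finset.prod_mul_distrib]
    exact Finset.prod_congr rfl fun i _ => div_eq_mul_inv _ _
  rw [h3, mul_assoc]
  congr 1
  rw [mul_comm, Finset.prod_sdiff (descents_subset hn w)]

lemma Znormal_nf (n : ℕ) (hn : 2 ≤ n) :
    Znormal n Pv Tv = (∏ i ∈ Finset.range n, (1 - Pv ^ i * Tv)⁻¹) *
      (1 - Pv ^ (n * (n - 1)) * Tv ^ (2 * n - 1))⁻¹ *
      ((∏ i ∈ Finset.Icc 1 (n - 2), (1 - Xv n i)⁻¹) *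
        ∑ w : Equiv.Perm (Fin (n - 1)),
          Pv ^ (-(invCount w : ℤ)) * ∏ i ∈ descents w, Xv n i) := by
  unfold Znormal
  congr 1
  rw [Finset.mul_sum]
  apply Finset.sum_congr rfl
  intro w _
  simp only [← Xv_def]
  rw [inner_eq hn w]
  ring

lemma term_inv_eq {n : ℕ} (hn : 2 ≤ n) (w : Equiv.Perm (Fin (n - 1))) :
    ∑ I ∈ (Finset.Icc 1 (n - 2)).powerset.filter (fun I => descents w ⊆ I),
      ∏ i ∈ I, (Xv n i)⁻¹ / (1 - (Xv n i)⁻¹)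
    = (-1:QPT) ^ (n - 2) * ((∏ i ∈ Finset.Icc 1 (n - 2) \ descents w, Xv n i) *
        ∏ i ∈ Finset.Icc 1 (n - 2), (1 - Xv n i)⁻¹) := by
  rw [sum_powerset_filter _ _ (descents_subset hn w)]
  have hmem : ∀ i ∈ descents w, i ≤ n - 2 := fun i hi =>
    (Finset.mem_Icc.mp (descents_subset hn w hi)).2
  have hp1 : ∏ i ∈ descents w, (Xv n i)⁻¹ / (1 - (Xv n i)⁻¹)
      = ∏ i ∈ descents w, -((1 - Xv n i)⁻¹) :=
    Finset.prod_congr rfl fun i hi => aux_inv_div (Xv_ne n i) (one_sub_Xv_ne hn (hmem i hi))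
  have hp2 : ∏ i ∈ Finset.Icc 1 (n - 2) \ descents w, (1 + (Xv n i)⁻¹ / (1 - (Xv n i)⁻¹))
      = ∏ i ∈ Finset.Icc 1 (n - 2) \ descents w, -(Xv n i * (1 - Xv n i)⁻¹) :=
    Finset.prod_congr rfl fun i hi => aux_one_add_inv_div (Xv_ne n i)
      (one_sub_Xv_ne hn (Finset.mem_Icc.mp ((Finset.mem_sdiff.mp hi).1)).2)
  rw [hp1, hp2, prod_neg', prod_neg', Finset.prod_mul_distrib]
  have hc : (descents w).card + (Finset.Icc 1 (n - 2) \ descents w).card = n - 2 := by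
    rw [add_comm, Finset.card_sdiff_add_card_eq_card (descents_subset hn w), Nat.card_Icc]
    omega
  have hinv : (∏ i ∈ descents w, (1 - Xv n i)⁻¹) *
      ∏ i ∈ Finset.Icc 1 (n - 2) \ descents w, (1 - Xv n i)⁻¹
      = ∏ i ∈ Finset.Icc 1 (n - 2), (1 - Xv n i)⁻¹ := by
    rw [mul_comm, Finset.prod_sdiff (descents_subset hn w)]
  calc ((-1:QPT) ^ (descents w).card * ∏ i ∈ descents w, (1 - Xv n i)⁻¹) *
        ((-1:QPT) ^ (Finset.Icc 1 (n - 2) \ descents w).card *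
          ((∏ i ∈ Finset.Icc 1 (n - 2) \ descents w, Xv n i) *
            ∏ i ∈ Finset.Icc 1 (n - 2) \ descents w, (1 - Xv n i)⁻¹))
      = (-1:QPT) ^ ((descents w).card + (Finset.Icc 1 (n - 2) \ descents w).card) *
        ((∏ i ∈ Finset.Icc 1 (n - 2) \ descents w, Xv n i) *
          ((∏ i ∈ descents w, (1 - Xv n i)⁻¹) *
            ∏ i ∈ Finset.Icc 1 (n - 2) \ descents w, (1 - Xv n i)⁻¹)) := by
        rw [pow_add]; ring
    _ = _ := by rw [hc, hinv]

lemma sum_inv_eq (n : ℕ) (hn : 2 ≤ n) :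
    ∑ w : Equiv.Perm (Fin (n - 1)), Pv ^ ((invCount w : ℤ)) *
       ((-1:QPT) ^ (n - 2) * ((∏ i ∈ Finset.Icc 1 (n - 2) \ descents w, Xv n i) *
         ∏ i ∈ Finset.Icc 1 (n - 2), (1 - Xv n i)⁻¹))
    = (-1:QPT) ^ (n - 2) * Pv ^ ((n - 1) * (n - 2) / 2) *
      ((∏ i ∈ Finset.Icc 1 (n - 2), (1 - Xv n i)⁻¹) *
        ∑ w : Equiv.Perm (Fin (n - 1)),
          Pv ^ (-(invCount w : ℤ)) * ∏ i ∈ descents w, Xv n i) := by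
  have hre := Equiv.sum_comp (Equiv.mulLeft (Fin.revPerm : Equiv.Perm (Fin (n - 1))))
    (fun w : Equiv.Perm (Fin (n - 1)) => Pv ^ ((invCount w : ℤ)) *
       ((-1:QPT) ^ (n - 2) * ((∏ i ∈ Finset.Icc 1 (n - 2) \ descents w, Xv n i) *
         ∏ i ∈ Finset.Icc 1 (n - 2), (1 - Xv n i)⁻¹)))
  rw [← hre]
  simp only [Equiv.coe_mulLeft]
  rw [Finset.mul_sum, Finset.mul_sum]
  apply Finset.sum_congr rfl
  intro w _
  have hd : descents (Fin.revPerm * w) = Finset.Icc 1 (n - 2) \ descents w := by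
    have h := descents_rev w
    rwa [show n - 1 - 1 = n - 2 by omega] at h
  have hdd : Finset.Icc 1 (n - 2) \ descents (Fin.revPerm * w) = descents w := by
    rw [hd, Finset.sdiff_sdiff_eq_self (descents_subset hn w)]
  have hl := invCount_rev_add w
  rw [show (n - 1) * (n - 1 - 1) / 2 = (n - 1) * (n - 2) / 2 by
    rw [show n - 1 - 1 = n - 2 by omega]] at hl
  have hlz : (invCount (Fin.revPerm * w) : ℤ)
      = ((n - 1) * (n - 2) / 2 : ℕ) + (-(invCount w : ℤ)) := by omega
  rw [hdd, hlz, zpow_add₀ Pv_ne, zpow_natCast]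
  ring

lemma arith1 (n : ℕ) (hn : 2 ≤ n) :
    n * (n - 1) / 2 + (n * (n - 1) + (n - 1) * (n - 2) / 2) = (2 * n - 1) * (n - 1) := by
  obtain ⟨m, rfl⟩ : ∃ m, n = m + 2 := ⟨n - 2, by omega⟩
  rw [show m + 2 - 1 = m + 1 by omega, show m + 2 - 2 = m by omega,
    show 2 * (m + 2) - 1 = 2 * m + 3 by omega]
  obtain ⟨k, hk⟩ := Nat.even_mul_succ_self m
  rw [show (m + 2) * (m + 1) = m * (m + 1) + 2 * (m + 1) by ring,
    show (m + 1) * m = m * (m + 1) by ring,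
    show (2 * m + 3) * (m + 1) = 2 * (m * (m + 1)) + 3 * m + 3 by ring, hk]
  omega

lemma Znormal_inv_nf (n : ℕ) (hn : 2 ≤ n) :
    Znormal n Pv⁻¹ Tv⁻¹ =
      -(Pv ^ ((2 * n - 1) * (n - 1)) * Tv ^ (3 * n - 1)) *
      ((∏ i ∈ Finset.range n, (1 - Pv ^ i * Tv)⁻¹) *
        (1 - Pv ^ (n * (n - 1)) * Tv ^ (2 * n - 1))⁻¹ *
        ((∏ i ∈ Finset.Icc 1 (n - 2), (1 - Xv n i)⁻¹) *
          ∑ w : Equiv.Perm (Fin (n - 1)),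
            Pv ^ (-(invCount w : ℤ)) * ∏ i ∈ descents w, Xv n i)) := by
  unfold Znormal
  have hA : ∏ i ∈ Finset.range n, (1 - Pv⁻¹ ^ i * Tv⁻¹)⁻¹
      = (-1:QPT) ^ n * (Pv ^ (n * (n - 1) / 2) * Tv ^ n) *
        ∏ i ∈ Finset.range n, (1 - Pv ^ i * Tv)⁻¹ := by
    have step : ∀ i ∈ Finset.range n,
        (1 - Pv⁻¹ ^ i * Tv⁻¹)⁻¹ = -((Pv ^ i * Tv) * (1 - Pv ^ i * Tv)⁻¹) := by
      intro i _
      have hu0 : Pv ^ i * Tv ≠ 0 := mul_ne_zero (pow_ne_zero _ Pv_ne) Tv_ne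
      have hu1 : (1:QPT) - Pv ^ i * Tv ≠ 0 := by
        simpa using one_sub_ne i 1 le_rfl
      have hfold : Pv⁻¹ ^ i * Tv⁻¹ = (Pv ^ i * Tv)⁻¹ := by
        rw [inv_pow, mul_inv]
      rw [hfold, aux_inv_one_sub_inv hu0 hu1]
    rw [Finset.prod_congr rfl step, prod_neg', Finset.prod_mul_distrib,
      Finset.prod_mul_distrib, Finset.prod_const, Finset.card_range,
      Finset.prod_pow_eq_pow_sum, Finset.sum_range_id]
    ring
  have hB : (1 - Pv⁻¹ ^ (n * (n - 1)) * Tv⁻¹ ^ (2 * n - 1))⁻¹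
      = -((Pv ^ (n * (n - 1)) * Tv ^ (2 * n - 1)) *
          (1 - Pv ^ (n * (n - 1)) * Tv ^ (2 * n - 1))⁻¹) := by
    have hu0 : Pv ^ (n * (n - 1)) * Tv ^ (2 * n - 1) ≠ 0 :=
      mul_ne_zero (pow_ne_zero _ Pv_ne) (pow_ne_zero _ Tv_ne)
    have hu1 : (1:QPT) - Pv ^ (n * (n - 1)) * Tv ^ (2 * n - 1) ≠ 0 :=
      one_sub_ne _ _ (by omega)
    have hfold : Pv⁻¹ ^ (n * (n - 1)) * Tv⁻¹ ^ (2 * n - 1)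
        = (Pv ^ (n * (n - 1)) * Tv ^ (2 * n - 1))⁻¹ := by
      rw [inv_pow, inv_pow, mul_inv]
    rw [hfold, aux_inv_one_sub_inv hu0 hu1]
  have hS : (∑ w : Equiv.Perm (Fin (n - 1)), Pv⁻¹ ^ (-(invCount w : ℤ)) *
        ∑ I ∈ (Finset.Icc 1 (n - 2)).powerset.filter (fun I => descents w ⊆ I),
          ∏ i ∈ I, (Pv⁻¹ ^ ((n + i) * (n - i - 1)) * Tv⁻¹ ^ (2 * (n - i) - 1)) /
            (1 - Pv⁻¹ ^ ((n + i) * (n - i - 1)) * Tv⁻¹ ^ (2 * (n - i) - 1)))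
      = (-1:QPT) ^ (n - 2) * Pv ^ ((n - 1) * (n - 2) / 2) *
        ((∏ i ∈ Finset.Icc 1 (n - 2), (1 - Xv n i)⁻¹) *
          ∑ w : Equiv.Perm (Fin (n - 1)),
            Pv ^ (-(invCount w : ℤ)) * ∏ i ∈ descents w, Xv n i) := by
    rw [← sum_inv_eq n hn]
    apply Finset.sum_congr rfl
    intro w _
    have hzp : Pv⁻¹ ^ (-(invCount w : ℤ)) = Pv ^ ((invCount w : ℤ)) := by
      rw [inv_zpow, ← zpow_neg, neg_neg]
    have hfold : ∀ i : ℕ, Pv⁻¹ ^ ((n + i) * (n - i - 1)) * Tv⁻¹ ^ (2 * (n - i) - 1)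
        = (Xv n i)⁻¹ := fun i => by
      rw [Xv_def, inv_pow, inv_pow, mul_inv]
    simp only [hfold, hzp]
    rw [term_inv_eq hn w]
  rw [hA, hB, hS]
  have hsgn : ((-1:QPT) ^ n) * ((-1:QPT) ^ (n - 2)) = 1 := by
    rw [← pow_add]
    exact Even.neg_one_pow ⟨n - 1, by omega⟩
  have hsPv : Pv ^ (n * (n - 1) / 2) * (Pv ^ (n * (n - 1)) * Pv ^ ((n - 1) * (n - 2) / 2))
      = Pv ^ ((2 * n - 1) * (n - 1)) := by
    rw [← pow_add, ← pow_add]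
    exact congrArg (Pv ^ ·) (arith1 n hn)
  have hsTv : Tv ^ n * Tv ^ (2 * n - 1) = Tv ^ (3 * n - 1) := by
    rw [← pow_add]
    exact congrArg (Tv ^ ·) (by omega)
  have grouped : ∀ A B CS : QPT,
      ((-1:QPT) ^ n * (Pv ^ (n * (n - 1) / 2) * Tv ^ n) * A) *
        (-((Pv ^ (n * (n - 1)) * Tv ^ (2 * n - 1)) *
            (1 - Pv ^ (n * (n - 1)) * Tv ^ (2 * n - 1))⁻¹)) *
        ((-1:QPT) ^ (n - 2) * Pv ^ ((n - 1) * (n - 2) / 2) * CS)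
      = -(Pv ^ ((2 * n - 1) * (n - 1)) * Tv ^ (3 * n - 1)) *
          (A * (1 - Pv ^ (n * (n - 1)) * Tv ^ (2 * n - 1))⁻¹ * CS) := by
    intro A B CS
    calc ((-1:QPT) ^ n * (Pv ^ (n * (n - 1) / 2) * Tv ^ n) * A) *
        (-((Pv ^ (n * (n - 1)) * Tv ^ (2 * n - 1)) *
            (1 - Pv ^ (n * (n - 1)) * Tv ^ (2 * n - 1))⁻¹)) *
        ((-1:QPT) ^ (n - 2) * Pv ^ ((n - 1) * (n - 2) / 2) * CS)
        = (((-1:QPT) ^ n) * ((-1:QPT) ^ (n - 2))) *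
          ((Pv ^ (n * (n - 1) / 2) * (Pv ^ (n * (n - 1)) * Pv ^ ((n - 1) * (n - 2) / 2))) *
            ((Tv ^ n * Tv ^ (2 * n - 1)) *
              (-(A * (1 - Pv ^ (n * (n - 1)) * Tv ^ (2 * n - 1))⁻¹ * CS)))) := by ring
      _ = _ := by rw [hsgn, hsPv, hsTv]; ring
  exact grouped _ 0 _

theorem normal_zeta_functional_equation (n : ℕ) (hn : 2 ≤ n) :
    Znormal n Pv⁻¹ Tv⁻¹ =
      -Pv ^ ((2 * n - 1) * (2 * n - 2) / 2) * Tv ^ (3 * n - 1) * Znormal n Pv Tv := by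
  rw [Znormal_inv_nf n hn, Znormal_nf n hn]
  have hexp : (2 * n - 1) * (2 * n - 2) / 2 = (2 * n - 1) * (n - 1) := by
    rw [show 2 * n - 2 = 2 * (n - 1) by omega,
      show (2 * n - 1) * (2 * (n - 1)) = 2 * ((2 * n - 1) * (n - 1)) by ring,
      Nat.mul_div_cancel_left _ (by norm_num)]
  rw [hexp]
  ring
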